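/- Let |ψ⟩ ∈ H_A ⊗ H_B ⊗ H_C be a unit vector, M_A and M_B contractions on H_A and H_B, with p_A = ‖(M_A⊗I⊗I)ψ‖² > 0 and p_AB = ‖(M_A⊗M_B⊗I)ψ‖² > 0. Let ψ'_A and ψ'_AB be the corresponding normalized post-measurement states. Then the min-entropy of the A-marginal satisfies H_∞(A)_{ψ'_AB} ≥ H_∞(A)_{ψ'_A} − log₂(p_A/p_AB). -/

import Mathlib

open Matrix

/-- Application of `M_A ⊗ I ⊗ I` to the coefficient tensor of a tripartite vector. -/
noncomputable def applyA {dA dB dC : ℕ} (M : Matrix (Fin dA) (Fin dA) ℂ)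
    (ψ : Fin dA × Fin dB × Fin dC → ℂ) : Fin dA × Fin dB × Fin dC → ℂ :=
  fun x => ∑ i' : Fin dA, M x.1 i' * ψ (i', x.2.1, x.2.2)

/-- Application of `I ⊗ M_B ⊗ I` to the coefficient tensor of a tripartite vector. -/
noncomputable def applyB {dA dB dC : ℕ} (M : Matrix (Fin dB) (Fin dB) ℂ)
    (ψ : Fin dA × Fin dB × Fin dC → ℂ) : Fin dA × Fin dB × Fin dC → ℂ :=
  fun x => ∑ j' : Fin dB, M x.2.1 j' * ψ (x.1, j', x.2.2)

/-- The reduced state on `A` of a tripartite vector. -/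
noncomputable def trBCmat {dA dB dC : ℕ} (w : Fin dA × Fin dB × Fin dC → ℂ) :
    Matrix (Fin dA) (Fin dA) ℂ :=
  Matrix.of fun i i' => ∑ j : Fin dB, ∑ k : Fin dC, w (i, j, k) * (starRingEnd ℂ) (w (i', j, k))

/-- The min-entropy of the `A`-marginal of a tripartite vector. -/
noncomputable def minEntropyA {dA dB dC : ℕ} (w : Fin dA × Fin dB × Fin dC → ℂ) : ℝ :=
  -Real.logb 2 ‖Matrix.toEuclideanCLM (𝕜 := ℂ) (trBCmat w)‖

set_option maxHeartbeats 1000000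
set_option synthInstance.maxHeartbeats 400000

section Aux

open ComplexConjugate

variable {dA dB dC : ℕ}

private lemma applyA_applyB_comm (MA : Matrix (Fin dA) (Fin dA) ℂ)
    (MB : Matrix (Fin dB) (Fin dB) ℂ) (ψ : Fin dA × Fin dB × Fin dC → ℂ) :
    applyA MA (applyB MB ψ) = applyB MB (applyA MA ψ) := by
  funext x
  simp only [applyA, applyB, Finset.mul_sum]
  rw [Finset.sum_comm]
  exact Finset.sum_congr rfl fun j _ => Finset.sum_congr rfl fun i _ => by ring

private noncomputable def Wmat (w : Fin dA × Fin dB × Fin dC → ℂ) :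
    Matrix (Fin dA) (Fin dB × Fin dC) ℂ :=
  Matrix.of fun i jk => w (i, jk.1, jk.2)

private lemma trBCmat_eq_mul (w : Fin dA × Fin dB × Fin dC → ℂ) :
    trBCmat w = Wmat w * (Wmat w)ᴴ := by
  ext i i'
  simp [trBCmat, Wmat, Matrix.mul_apply, Matrix.conjTranspose_apply, Fintype.sum_prod_type]

private lemma norm_sq_cast (z : ℂ) : z * (starRingEnd ℂ) z = (‖z‖ : ℂ) ^ 2 := by
  rw [Complex.mul_conj, Complex.normSq_eq_norm_sq]
  push_cast
  ring

private lemma inner_trBCmat (w : Fin dA × Fin dB × Fin dC → ℂ)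
    (x : EuclideanSpace ℂ (Fin dA)) :
    (inner ℂ x (Matrix.toEuclideanCLM (𝕜 := ℂ) (trBCmat w) x) : ℂ) =
      ((∑ jk : Fin dB × Fin dC, ‖∑ i, conj (x i) * w (i, jk.1, jk.2)‖ ^ 2 : ℝ) : ℂ) := by
  have h1 : (inner ℂ x (Matrix.toEuclideanCLM (𝕜 := ℂ) (trBCmat w) x) : ℂ)
      = dotProduct (star (fun i => x i)) ((trBCmat w).mulVec (fun i => x i)) := by
    rw [PiLp.inner_apply]
    refine Finset.sum_congr rfl fun i _ => ?_
    simp only [RCLike.inner_apply, Pi.star_apply, RCLike.star_def, ofLp_toEuclideanCLM]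
    ring
  rw [h1, trBCmat_eq_mul, ← Matrix.mulVec_mulVec, dotProduct_mulVec,
    Matrix.mulVec_conjTranspose]
  have hu : ∀ jk : Fin dB × Fin dC, (Matrix.vecMul (star fun i => x i) (Wmat w)) jk
      = ∑ i, conj (x i) * w (i, jk.1, jk.2) := by
    intro jk
    simp [Matrix.vecMul, dotProduct, Wmat]
  simp only [dotProduct, Pi.star_apply, hu, Complex.star_def]
  push_cast
  exact Finset.sum_congr rfl fun jk _ => norm_sq_cast _

private lemma star_trBCmat (w : Fin dA × Fin dB × Fin dC → ℂ) :
    star (trBCmat w) = trBCmat w := by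
  ext i i'
  simp only [Matrix.star_eq_conjTranspose, Matrix.conjTranspose_apply, trBCmat, Matrix.of_apply,
    Complex.star_def, map_sum, _root_.map_mul, Complex.conj_conj]
  exact Finset.sum_congr rfl fun j _ => Finset.sum_congr rfl fun k _ => by ring

private lemma isSelfAdjoint_trBCmat (w : Fin dA × Fin dB × Fin dC → ℂ) :
    _root_.IsSelfAdjoint (Matrix.toEuclideanCLM (𝕜 := ℂ) (trBCmat w)) := by
  rw [_root_.IsSelfAdjoint, ← map_star, star_trBCmat]

private lemma isPositive_trBCmat (w : Fin dA × Fin dB × Fin dC → ℂ) :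
    (Matrix.toEuclideanCLM (𝕜 := ℂ) (trBCmat w)).IsPositive := by
  refine ⟨(isSelfAdjoint_trBCmat w).isSymmetric, fun x => ?_⟩
  rw [ContinuousLinearMap.reApplyInnerSelf_apply, inner_re_symm, inner_trBCmat]
  simp only [RCLike.re_to_complex, Complex.ofReal_re]
  positivity

private lemma sum_norm_sq_mulVec_le {n : ℕ} (M : Matrix (Fin n) (Fin n) ℂ)
    (hM : ‖Matrix.toEuclideanCLM (𝕜 := ℂ) M‖ ≤ 1) (v : Fin n → ℂ) :
    ∑ j, ‖M.mulVec v j‖ ^ 2 ≤ ∑ j, ‖v j‖ ^ 2 := by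
  set v' : EuclideanSpace ℂ (Fin n) := (WithLp.equiv 2 _).symm v with hv'
  have happ : Matrix.toEuclideanCLM (𝕜 := ℂ) M v' = (WithLp.equiv 2 _).symm (M.mulVec v) := by
    rw [hv']
    rfl
  have h2 : ∑ j, ‖M.mulVec v j‖ ^ 2 = ‖Matrix.toEuclideanCLM (𝕜 := ℂ) M v'‖ ^ 2 := by
    rw [happ, EuclideanSpace.norm_eq, Real.sq_sqrt (by positivity)]
    rfl
  have h3 : ∑ j, ‖v j‖ ^ 2 = ‖v'‖ ^ 2 := by
    rw [EuclideanSpace.norm_eq, Real.sq_sqrt (by positivity)]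
    rfl
  rw [h2, h3]
  have hb : ‖Matrix.toEuclideanCLM (𝕜 := ℂ) M v'‖ ≤ ‖v'‖ := by
    calc ‖Matrix.toEuclideanCLM (𝕜 := ℂ) M v'‖
        ≤ ‖Matrix.toEuclideanCLM (𝕜 := ℂ) M‖ * ‖v'‖ :=
          (Matrix.toEuclideanCLM (𝕜 := ℂ) M).le_opNorm v'
      _ ≤ 1 * ‖v'‖ := mul_le_mul_of_nonneg_right hM (norm_nonneg _)
      _ = ‖v'‖ := one_mul _
  exact pow_le_pow_left₀ (norm_nonneg _) hb 2

private lemma key_quadform_le (MB : Matrix (Fin dB) (Fin dB) ℂ)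
    (hMB : ‖Matrix.toEuclideanCLM (𝕜 := ℂ) MB‖ ≤ 1) (w : Fin dA × Fin dB × Fin dC → ℂ)
    (x : EuclideanSpace ℂ (Fin dA)) :
    ∑ jk : Fin dB × Fin dC, ‖∑ i, conj (x i) * (applyB MB w) (i, jk.1, jk.2)‖ ^ 2 ≤
      ∑ jk : Fin dB × Fin dC, ‖∑ i, conj (x i) * w (i, jk.1, jk.2)‖ ^ 2 := by
  rw [Fintype.sum_prod_type, Finset.sum_comm, Fintype.sum_prod_type, Finset.sum_comm
    (s := (Finset.univ : Finset (Fin dB)))]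
  refine Finset.sum_le_sum fun k _ => ?_
  have hfun : ∀ j, (∑ i, conj (x i) * (applyB MB w) (i, j, k))
      = MB.mulVec (fun j => ∑ i, conj (x i) * w (i, j, k)) j := by
    intro j
    simp only [applyB, Matrix.mulVec, dotProduct, Finset.mul_sum]
    rw [Finset.sum_comm]
    exact Finset.sum_congr rfl fun j' _ => Finset.sum_congr rfl fun i _ => by ring
  calc ∑ j, ‖∑ i, conj (x i) * (applyB MB w) (i, j, k)‖ ^ 2
      = ∑ j, ‖MB.mulVec (fun j => ∑ i, conj (x i) * w (i, j, k)) j‖ ^ 2 :=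
        Finset.sum_congr rfl fun j _ => by rw [hfun j]
    _ ≤ ∑ j, ‖∑ i, conj (x i) * w (i, j, k)‖ ^ 2 := sum_norm_sq_mulVec_le MB hMB _

private lemma clm_trBC_le (MB : Matrix (Fin dB) (Fin dB) ℂ)
    (hMB : ‖Matrix.toEuclideanCLM (𝕜 := ℂ) MB‖ ≤ 1) (w : Fin dA × Fin dB × Fin dC → ℂ) :
    Matrix.toEuclideanCLM (𝕜 := ℂ) (trBCmat (applyB MB w)) ≤
      Matrix.toEuclideanCLM (𝕜 := ℂ) (trBCmat w) := by
  rw [ContinuousLinearMap.le_def]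
  refine ⟨((isSelfAdjoint_trBCmat w).sub (isSelfAdjoint_trBCmat (applyB MB w))).isSymmetric, fun x => ?_⟩
  rw [ContinuousLinearMap.reApplyInnerSelf_apply, inner_re_symm,
    ContinuousLinearMap.sub_apply, inner_sub_right, map_sub,
    inner_trBCmat, inner_trBCmat]
  simp only [RCLike.re_to_complex, Complex.ofReal_re]
  rw [sub_nonneg]
  exact key_quadform_le MB hMB w x

private lemma norm_clm_trBC_pos (w : Fin dA × Fin dB × Fin dC → ℂ)
    (h : 0 < ∑ x, ‖w x‖ ^ 2) :
    0 < ‖Matrix.toEuclideanCLM (𝕜 := ℂ) (trBCmat w)‖ := by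
  rw [norm_pos_iff]
  intro h0
  have hT : trBCmat w = 0 := by
    have := congrArg (Matrix.toEuclideanCLM (𝕜 := ℂ)).symm h0
    simpa using this
  have htr : ((∑ x, ‖w x‖ ^ 2 : ℝ) : ℂ) = ∑ i, trBCmat w i i := by
    rw [Fintype.sum_prod_type]
    push_cast
    refine Finset.sum_congr rfl fun i _ => ?_
    rw [Fintype.sum_prod_type]
    simp only [trBCmat, Matrix.of_apply]
    push_cast
    refine Finset.sum_congr rfl fun j _ => Finset.sum_congr rfl fun k _ => ?_
    rw [norm_sq_cast]
  rw [hT] at htr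
  simp only [Matrix.zero_apply, Finset.sum_const_zero, Complex.ofReal_eq_zero] at htr
  linarith

private lemma trBCmat_smul (c : ℂ) (w : Fin dA × Fin dB × Fin dC → ℂ) :
    trBCmat (fun x => c * w x) = (c * conj c) • trBCmat w := by
  ext i i'
  simp only [trBCmat, Matrix.of_apply, Matrix.smul_apply, smul_eq_mul, Finset.mul_sum,
    _root_.map_mul]
  exact Finset.sum_congr rfl fun j _ => Finset.sum_congr rfl fun k _ => by ring

private lemma minEntropy_scale (p : ℝ) (hp : 0 < p) (w : Fin dA × Fin dB × Fin dC → ℂ) :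
    minEntropyA (fun x => (Real.sqrt p : ℂ)⁻¹ * w x)
      = -Real.logb 2 (p⁻¹ * ‖Matrix.toEuclideanCLM (𝕜 := ℂ) (trBCmat w)‖) := by
  unfold minEntropyA
  rw [trBCmat_smul]
  have hc : ((Real.sqrt p : ℂ))⁻¹ * conj ((Real.sqrt p : ℂ))⁻¹ = ((p⁻¹ : ℝ) : ℂ) := by
    rw [map_inv₀, Complex.conj_ofReal, ← mul_inv, ← Complex.ofReal_mul,
      Real.mul_self_sqrt hp.le, Complex.ofReal_inv]
  have hns := norm_smul (((p⁻¹ : ℝ) : ℂ)) (Matrix.toEuclideanCLM (𝕜 := ℂ) (trBCmat w))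
  rw [hc, _root_.map_smul, hns, Complex.norm_real, Real.norm_eq_abs,
    abs_of_pos (inv_pos.mpr hp)]

private lemma logb_arith (pA pAB NA NAB : ℝ) (hpA : 0 < pA) (hpAB : 0 < pAB)
    (hNAB : 0 < NAB) (hle : NAB ≤ NA) :
    -Real.logb 2 (pA⁻¹ * NA) - Real.logb 2 (pA / pAB) ≤ -Real.logb 2 (pAB⁻¹ * NAB) := by
  have hNA : 0 < NA := lt_of_lt_of_le hNAB hle
  have h1 : Real.logb 2 (pAB⁻¹ * NAB) ≤ Real.logb 2 (pAB⁻¹ * NA) :=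
    Real.logb_le_logb_of_le (by norm_num) (by positivity)
      (mul_le_mul_of_nonneg_left hle (by positivity))
  have h2 : Real.logb 2 (pAB⁻¹ * NA) = Real.logb 2 (pA⁻¹ * NA) + Real.logb 2 (pA / pAB) := by
    rw [← Real.logb_mul (by positivity) (by positivity)]
    congr 1
    field_simp
  linarith

end Aux

/-- For a unit tripartite vector `ψ` and contractions `M_A`, `M_B` with both outcome
probabilities positive, the min-entropy of the `A`-marginal of the doubly truncated normalized
state is at least that of the singly (`A`-)truncated normalized state minus
`log₂(p_A / p_AB)`. -/
theorem minEntropy_simultaneous_truncation {dA dB dC : ℕ}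
    (ψ : Fin dA × Fin dB × Fin dC → ℂ) (hunit : ∑ x, ‖ψ x‖ ^ 2 = 1)
    (MA : Matrix (Fin dA) (Fin dA) ℂ) (MB : Matrix (Fin dB) (Fin dB) ℂ)
    (hMA : ‖Matrix.toEuclideanCLM (𝕜 := ℂ) MA‖ ≤ 1)
    (hMB : ‖Matrix.toEuclideanCLM (𝕜 := ℂ) MB‖ ≤ 1)
    (pA pAB : ℝ)
    (hpA : pA = ∑ x, ‖applyA MA ψ x‖ ^ 2)
    (hpAB : pAB = ∑ x, ‖applyA MA (applyB MB ψ) x‖ ^ 2)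
    (hpApos : 0 < pA) (hpABpos : 0 < pAB) :
    minEntropyA (fun x => (Real.sqrt pA : ℂ)⁻¹ * applyA MA ψ x) -
        Real.logb 2 (pA / pAB) ≤
      minEntropyA (fun x => (Real.sqrt pAB : ℂ)⁻¹ * applyA MA (applyB MB ψ) x) := by
  have hNABpos : 0 < ‖Matrix.toEuclideanCLM (𝕜 := ℂ) (trBCmat (applyA MA (applyB MB ψ)))‖ :=
    norm_clm_trBC_pos _ (by rw [← hpAB]; exact hpABpos)
  have hle : ‖Matrix.toEuclideanCLM (𝕜 := ℂ) (trBCmat (applyA MA (applyB MB ψ)))‖ ≤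
      ‖Matrix.toEuclideanCLM (𝕜 := ℂ) (trBCmat (applyA MA ψ))‖ := by
    rw [applyA_applyB_comm]
    exact CStarAlgebra.norm_le_norm_of_nonneg_of_le
      ((ContinuousLinearMap.nonneg_iff_isPositive _).mpr (isPositive_trBCmat _))
      (clm_trBC_le MB hMB (applyA MA ψ))
  rw [minEntropy_scale pA hpApos, minEntropy_scale pAB hpABpos]
  exact logb_arith pA pAB _ _ hpApos hpABpos hNABpos hle
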